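/- For every positive integer n, the function q ↦ q/(1 − (1−q)^n) is convex on the interval (0,1]. -/

import Mathlib

lemma key_sum (n : ℕ) (hn : 1 ≤ n) (t : ℝ) (h0 : 0 ≤ t) (h1 : t ≤ 1) :
    2 * ∑ k ∈ Finset.Ico 1 n, t ^ k ≤ ((n : ℝ) - 1) * (1 + t ^ n) := by
  have hrefl : ∑ k ∈ Finset.Ico 1 n, t ^ (n - k) = ∑ k ∈ Finset.Ico 1 n, t ^ k := by
    rw [Finset.sum_Ico_eq_sum_range, Finset.sum_Ico_eq_sum_range,
      ← Finset.sum_range_reflect]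
    apply Finset.sum_congr rfl
    intro i hi
    simp only [Finset.mem_range] at hi
    congr 1
    omega
  have hterm : ∀ k ∈ Finset.Ico 1 n, (1 - t ^ k) * (1 - t ^ (n - k)) =
      1 + t ^ n - t ^ k - t ^ (n - k) := by
    intro k hk
    simp only [Finset.mem_Ico] at hk
    have h : t ^ (n - k) * t ^ k = t ^ n := by
      rw [← pow_add, Nat.sub_add_cancel hk.2.le]
    nlinarith [h]
  have hsum : (0:ℝ) ≤ ∑ k ∈ Finset.Ico 1 n, (1 - t ^ k) * (1 - t ^ (n - k)) := by
    apply Finset.sum_nonneg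
    intro k _
    have := pow_le_one₀ h0 h1 (n := k)
    have := pow_le_one₀ h0 h1 (n := n - k)
    nlinarith
  rw [Finset.sum_congr rfl hterm] at hsum
  have hcard : ((Finset.Ico 1 n).card : ℝ) = (n : ℝ) - 1 := by
    rcases n with _ | n
    · omega
    · rw [Nat.card_Ico]; push_cast; ring
  have hexp : ∑ k ∈ Finset.Ico 1 n, (1 + t ^ n - t ^ k - t ^ (n - k)) =
      ((n:ℝ) - 1) * (1 + t ^ n) - (∑ k ∈ Finset.Ico 1 n, t ^ k)
        - ∑ k ∈ Finset.Ico 1 n, t ^ (n - k) := by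
    rw [Finset.sum_sub_distrib, Finset.sum_sub_distrib, Finset.sum_const, nsmul_eq_mul, hcard]
  rw [hexp, hrefl] at hsum
  linarith

lemma geom_Ico (n : ℕ) (hn : 1 ≤ n) (t : ℝ) :
    (1 - t) * ∑ k ∈ Finset.Ico 1 n, t ^ k = t - t ^ n := by
  obtain ⟨m, rfl⟩ : ∃ m, n = m + 1 := ⟨n - 1, by omega⟩
  induction m with
  | zero => simp
  | succ m ih =>
    rw [Finset.sum_Ico_succ_top (by omega : 1 ≤ m + 1), mul_add, ih (by omega), pow_succ]
    ring

theorem stmt_13 (n : ℕ) (hn : 0 < n) :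
    ConvexOn ℝ (Set.Ioc (0:ℝ) 1) (fun q : ℝ => q / (1 - (1 - q) ^ n)) := by
  rcases n with _ | _ | m
  · omega
  · -- n = 1
    refine ⟨convex_Ioc 0 1, ?_⟩
    intro x hx y hy a b ha hb hab
    have hmem := (convex_Ioc (0:ℝ) 1) hx hy ha hb hab
    have hval : ∀ z ∈ Set.Ioc (0:ℝ) 1, z / (1 - (1 - z) ^ 1) = 1 := by
      intro z hz
      rw [pow_one, show (1:ℝ) - (1 - z) = z by ring, div_self (ne_of_gt hz.1)]
    simp only [smul_eq_mul] at hmem ⊢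
    rw [hval _ hmem, hval _ hx, hval _ hy]
    linarith
  · -- n = m + 2
    have hdpos : ∀ x ∈ Set.Ioc (0:ℝ) 1, (0:ℝ) < 1 - (1 - x) ^ (m + 2) := by
      intro x hx
      have h0 : (0:ℝ) ≤ 1 - x := by linarith [hx.2]
      have h1 : 1 - x < 1 := by linarith [hx.1]
      have := pow_lt_one₀ h0 h1 (by omega : m + 2 ≠ 0)
      linarith
    have hIoo : ∀ x ∈ Set.Ioo (0:ℝ) 1, x ∈ Set.Ioc (0:ℝ) 1 := fun x hx => ⟨hx.1, hx.2.le⟩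
    refine convexOn_of_hasDerivWithinAt2_nonneg (convex_Ioc 0 1)
      (f' := fun x => (1 * (1 - (1 - x) ^ (m+2)) - x * (((m:ℝ)+2) * (1 - x) ^ (m+1))) /
        (1 - (1 - x) ^ (m+2)) ^ 2)
      (f'' := fun x => ((x * (((m:ℝ)+2) * ((m:ℝ)+1) * (1 - x) ^ m)) * ((1 - (1 - x) ^ (m+2)) ^ 2)
        - (1 * (1 - (1 - x) ^ (m+2)) - x * (((m:ℝ)+2) * (1 - x) ^ (m+1)))
          * (2 * (1 - (1 - x) ^ (m+2)) * (((m:ℝ)+2) * (1 - x) ^ (m+1))))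
        / ((1 - (1 - x) ^ (m+2)) ^ 2) ^ 2)
      ?_ ?_ ?_ ?_
    · -- continuity
      apply ContinuousOn.div continuous_id.continuousOn
      · exact (continuous_const.sub ((continuous_const.sub continuous_id).pow (m+2))).continuousOn
      · exact fun x hx => ne_of_gt (hdpos x hx)
    · -- first derivative
      rw [interior_Ioc]
      intro x hx
      have hne : (1 - (1 - x) ^ (m+2)) ≠ 0 := ne_of_gt (hdpos x (hIoo x hx))
      have hbase : HasDerivAt (fun y : ℝ => 1 - y) (-1) x := (hasDerivAt_id x).const_sub 1
      have hd : HasDerivAt (fun y : ℝ => 1 - (1 - y) ^ (m+2))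
          (((m:ℝ)+2) * (1 - x) ^ (m+1)) x := by
        have h2 : HasDerivAt (fun y : ℝ => 1 - (1 - y) ^ (m+2)) _ x := (hbase.fun_pow (m+2)).const_sub 1
        convert h2 using 1
        push_cast
        ring
      have h3 := (hasDerivAt_id x).div hd hne
      exact h3.hasDerivWithinAt
    · -- second derivative
      rw [interior_Ioc]
      intro x hx
      have hne : (1 - (1 - x) ^ (m+2)) ≠ 0 := ne_of_gt (hdpos x (hIoo x hx))
      have hne2 : ((1 - (1 - x) ^ (m+2)) ^ 2) ≠ 0 := pow_ne_zero 2 hne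
      have hbase : HasDerivAt (fun y : ℝ => 1 - y) (-1) x := (hasDerivAt_id x).const_sub 1
      have hd : HasDerivAt (fun y : ℝ => 1 - (1 - y) ^ (m+2))
          (((m:ℝ)+2) * (1 - x) ^ (m+1)) x := by
        have h2 : HasDerivAt (fun y : ℝ => 1 - (1 - y) ^ (m+2)) _ x := (hbase.fun_pow (m+2)).const_sub 1
        convert h2 using 1
        push_cast
        ring
      have he : HasDerivAt (fun y : ℝ => ((m:ℝ)+2) * (1 - y) ^ (m+1))
          (-(((m:ℝ)+2) * ((m:ℝ)+1) * (1 - x) ^ m)) x := by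
        have h2 : HasDerivAt (fun y : ℝ => ((m:ℝ)+2) * (1 - y) ^ (m+1)) _ x := (hbase.fun_pow (m+1)).const_mul ((m:ℝ)+2)
        convert h2 using 1
        push_cast
        ring
      have hu : HasDerivAt (fun y : ℝ => 1 * (1 - (1 - y) ^ (m+2))
          - y * (((m:ℝ)+2) * (1 - y) ^ (m+1)))
          (x * (((m:ℝ)+2) * ((m:ℝ)+1) * (1 - x) ^ m)) x := by
        have h2 : HasDerivAt (fun y : ℝ => 1 * (1 - (1 - y) ^ (m+2))
            - y * (((m:ℝ)+2) * (1 - y) ^ (m+1))) _ x := (hd.const_mul (1:ℝ)).sub ((hasDerivAt_id x).mul he)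
        convert h2 using 1
        simp only [id_eq]
        ring
      have hv : HasDerivAt (fun y : ℝ => (1 - (1 - y) ^ (m+2)) ^ 2)
          (2 * (1 - (1 - x) ^ (m+2)) * (((m:ℝ)+2) * (1 - x) ^ (m+1))) x := by
        have h2 : HasDerivAt (fun y : ℝ => (1 - (1 - y) ^ (m+2)) ^ 2) _ x := hd.fun_pow 2
        convert h2 using 1
        push_cast
        ring
      have h3 := hu.div hv hne2
      exact h3.hasDerivWithinAt
    · -- nonnegativity of f''
      rw [interior_Ioc]
      intro x hx
      apply div_nonneg _ (by positivity)
      obtain ⟨t, ht0, ht1, rfl⟩ : ∃ t : ℝ, 0 < t ∧ t < 1 ∧ x = 1 - t :=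
        ⟨1 - x, by linarith [hx.2], by linarith [hx.1], by ring⟩
      rw [show (1:ℝ) - (1 - t) = t by ring]
      have hd0 : (0:ℝ) < 1 - t ^ (m+2) := by
        have := pow_lt_one₀ ht0.le ht1 (by omega : m + 2 ≠ 0)
        linarith
      set S : ℝ := ∑ k ∈ Finset.Ico 1 (m+2), t ^ k with hS
      have hgeom : (1 - t) * S = t - t ^ (m+2) := geom_Ico (m+2) (by omega) t
      have hkey : 2 * S ≤ ((m:ℝ) + 1) * (1 + t ^ (m+2)) := by
        have := key_sum (m+2) (by omega) t ht0.le ht1.le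
        push_cast at this
        convert this using 2
        ring
      have hiden : ((1 - t) * (((m:ℝ)+2) * ((m:ℝ)+1) * t ^ m)) * ((1 - t ^ (m+2)) ^ 2)
          - (1 * (1 - t ^ (m+2)) - (1 - t) * (((m:ℝ)+2) * t ^ (m+1)))
            * (2 * (1 - t ^ (m+2)) * (((m:ℝ)+2) * t ^ (m+1)))
          = (1 - t ^ (m+2)) * (((m:ℝ)+2) * t ^ m *
              ((1 - t) * (((m:ℝ)+1) * (1 + t ^ (m+2)) - 2 * S))) := by
        linear_combination (2 * ((m:ℝ)+2) * t^m * (1 - t^(m+2))) * hgeom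
      rw [hiden]
      have hR : (0:ℝ) ≤ ((m:ℝ)+1) * (1 + t ^ (m+2)) - 2 * S := by linarith
      have : (0:ℝ) ≤ (1 - t) * (((m:ℝ)+1) * (1 + t ^ (m+2)) - 2 * S) :=
        mul_nonneg (by linarith) hR
      positivity
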